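/- Suppose Assumptions (A1) with C_err = 1 and (A2) with β ≥ 1/2 hold, that ‖u − u†‖_X^q ≤ C_bd·D_{u*}(u, u†) for all u ∈ 𝔅 with constants C_bd > 0 and q ≥ 1, and that u_α is a global minimizer over 𝔅 of the Tikhonov functional. Then for all α > 0, ‖u_α − u†‖_X ≤ (1/2)·( f_app(α) + f_noi(α) ), where f_app(α) := 2·( 2·C_bd·(−φ)*(−1/α) )^{1/q} and f_noi(α) := 2·( 2·C_bd·err/α )^{1/q}. -/

import Mathlib

open scoped ENNReal

noncomputable section

/-- The Fenchel conjugate of `-φ` (extended by `+∞` to negative arguments),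
`(−φ)*(s) = sup_{τ ≥ 0} (s·τ + φ(τ))`. -/
def negPhiStar (φ : ℝ → ℝ) (s : ℝ) : ℝ :=
  sSup { y | ∃ τ ≥ (0 : ℝ), y = s * τ + φ τ }

/-- Evaluation `φ(τ)` of an index function at an extended argument `τ ∈ [0,∞]`,
with the convention `φ(∞) = ∞`. -/
def phiE (φ : ℝ → ℝ) (τ : ℝ≥0∞) : EReal :=
  if τ = ⊤ then (⊤ : EReal) else ((φ τ.toReal : ℝ) : EReal)

/-- The Bregman distance `D_{u*}(u, u†) = R(u) − R(u†) − ⟨u*, u − u†⟩`. -/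
def bregman {X : Type*} [NormedAddCommGroup X] [NormedSpace ℝ X]
    (R : X → EReal) (ustar : X →L[ℝ] ℝ) (udag u : X) : EReal :=
  R u - R udag - ((ustar (u - udag) : ℝ) : EReal)

lemma ereal_ennreal_eq {x : ℝ≥0∞} (hx : x ≠ ⊤) :
    ((x : EReal)) = ((x.toReal : ℝ) : EReal) := by
  rw [← EReal.toReal_coe_ennreal]
  refine (EReal.coe_toReal (by simpa using hx) ?_).symm
  exact EReal.coe_ennreal_ne_bot x

lemma real_rpow_add_le {a b p : ℝ} (ha : 0 ≤ a) (hb : 0 ≤ b) (hp0 : 0 ≤ p) (hp1 : p ≤ 1) :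
    (a + b) ^ p ≤ a ^ p + b ^ p := by
  have h := NNReal.rpow_add_le_add_rpow a.toNNReal b.toNNReal hp0 hp1
  rw [← Real.toNNReal_add ha hb] at h
  have h2 := NNReal.coe_le_coe.2 h
  rw [NNReal.coe_add] at h2
  simpa [NNReal.coe_rpow, Real.coe_toNNReal _ (add_nonneg ha hb),
    Real.coe_toNNReal _ ha, Real.coe_toNNReal _ hb] using h2

/-- **Error decomposition for the Lepskiĭ principle.**
Under Assumption (A1) with `C_err = 1` and Assumption (A2) with `β ≥ 1/2`, if
`‖u − u†‖^q ≤ C_bd·D_{u*}(u, u†)` on `𝔅` (with `C_bd > 0`, `q ≥ 1`) and `u_α` is a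
global minimizer over `𝔅` of the Tikhonov functional, then for all `α > 0`,
`‖u_α − u†‖ ≤ (1/2)·(f_app(α) + f_noi(α))`, where
`f_app(α) = 2·(2·C_bd·(−φ)*(−1/α))^{1/q}` and `f_noi(α) = 2·(2·C_bd·err/α)^{1/q}`. -/
theorem statement_12
    {X Y Yobs : Type*} [NormedAddCommGroup X] [NormedSpace ℝ X] [CompleteSpace X]
    (B : Set X) (udag : X) (hudag : udag ∈ B)
    (F : X → Y) (gobs : Yobs)
    (S : Y → Yobs → ℝ≥0∞) (T : Y → Y → ℝ≥0∞)
    (err : ℝ) (herr : 0 ≤ err)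
    -- Assumption (A1) with `C_err = 1`
    (hT0 : T (F udag) (F udag) = 0)
    (hA1 : ∀ u ∈ B,
      ((T (F u) (F udag) : ℝ≥0∞) : EReal) - ((err : ℝ) : EReal)
        ≤ ((S (F u) gobs : ℝ≥0∞) : EReal) - ((S (F udag) gobs : ℝ≥0∞) : EReal))
    -- the penalty is proper and convex
    (R : X → EReal)
    (hRbot : ∀ u, R u ≠ ⊥) (hRtop : ∃ u, R u ≠ ⊤)
    (hRconv : ∀ u v : X, ∀ a b : ℝ, 0 ≤ a → 0 ≤ b → a + b = 1 →
      R (a • u + b • v) ≤ (a : EReal) * R u + (b : EReal) * R v)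
    -- `u*` is a subgradient of `R` at `u†`
    (ustar : X →L[ℝ] ℝ)
    (hsub : ∀ u : X, R udag + ((ustar (u - udag) : ℝ) : EReal) ≤ R u)
    -- Assumption (A2) with `β ≥ 1/2`
    (φ : ℝ → ℝ) (β : ℝ) (hβ : 1 / 2 ≤ β)
    (hφ0 : φ 0 = 0) (hφmono : MonotoneOn φ (Set.Ici (0 : ℝ)))
    (hφnonneg : ∀ τ ≥ (0 : ℝ), 0 ≤ φ τ)
    (hφ2concave : ConcaveOn ℝ (Set.Ici (0 : ℝ)) fun τ => φ τ ^ 2)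
    (hA2 : ∀ u ∈ B, ((β : ℝ) : EReal) * bregman R ustar udag u
        ≤ R u - R udag + phiE φ (T (F u) (F udag)))
    -- the Bregman distance dominates the `q`-th power of the norm
    (q Cbd : ℝ) (hq : 1 ≤ q) (hCbd : 0 < Cbd)
    (hbd : ∀ u ∈ B, ((‖u - udag‖ ^ q : ℝ) : EReal)
        ≤ ((Cbd : ℝ) : EReal) * bregman R ustar udag u) :
    ∀ α : ℝ, 0 < α → ∀ uα : X, uα ∈ B →
      (∀ u ∈ B,
        ((S (F uα) gobs : ℝ≥0∞) : EReal) + ((α : ℝ) : EReal) * R uα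
          ≤ ((S (F u) gobs : ℝ≥0∞) : EReal) + ((α : ℝ) : EReal) * R u) →
      ‖uα - udag‖ ≤ (1 / 2) *
        (2 * (2 * Cbd * negPhiStar φ (-(1 / α))) ^ (1 / q)
          + 2 * (2 * Cbd * err / α) ^ (1 / q)) := by
  intro α hα uα huα hmin
  have hαne : α ≠ 0 := ne_of_gt hα
  -- the set defining negPhiStar is nonempty and bounded above
  set Sset : Set ℝ := { y | ∃ τ ≥ (0 : ℝ), y = -(1/α) * τ + φ τ } with hSset
  have hmem0 : (0 : ℝ) ∈ Sset := ⟨0, le_rfl, by simp [hφ0]⟩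
  have hbdd : BddAbove Sset := by
    refine ⟨max (φ 1) (α * φ 1 ^ 2 / 4), ?_⟩
    rintro y ⟨τ, hτ, rfl⟩
    by_cases hτ1 : τ ≤ 1
    · have h1 : φ τ ≤ φ 1 := hφmono hτ (by norm_num) hτ1
      have h2 : 0 ≤ (1/α) * τ := by positivity
      refine le_trans ?_ (le_max_left _ _)
      nlinarith
    · push_neg at hτ1
      have hτpos : (0:ℝ) < τ := lt_trans one_pos hτ1
      -- concavity of φ² gives φ(τ)² ≤ τ φ(1)²
      have ha' : (0:ℝ) ≤ 1 - 1/τ := by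
        rw [sub_nonneg]; exact le_of_lt (by rw [div_lt_one hτpos]; exact hτ1)
      have hb' : (0:ℝ) ≤ 1/τ := by positivity
      have hab : (1 - 1/τ) + (1/τ) = (1:ℝ) := by ring
      have hc := hφ2concave.2 (Set.mem_Ici.2 (le_refl (0:ℝ))) (Set.mem_Ici.2 hτ) ha' hb' hab
      have hcomb : (1 - 1/τ) • (0:ℝ) + (1/τ) • τ = 1 := by
        simp only [smul_eq_mul, mul_zero, zero_add]; field_simp
      rw [hcomb] at hc
      simp only [smul_eq_mul, hφ0] at hc
      have hφτ2 : φ τ ^ 2 ≤ τ * φ 1 ^ 2 := by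
        have h6 : 1/τ * φ τ ^ 2 ≤ φ 1 ^ 2 := by nlinarith [hc]
        have h8 : τ * (1/τ * φ τ ^ 2) = φ τ ^ 2 := by field_simp
        have h9 := mul_le_mul_of_nonneg_left h6 hτ
        rw [h8] at h9
        linarith
      -- hence φ(τ) ≤ √τ · φ(1)
      have hφτ : φ τ ≤ Real.sqrt τ * φ 1 := by
        have h1 : φ τ = Real.sqrt (φ τ ^ 2) := (Real.sqrt_sq (hφnonneg τ hτ)).symm
        rw [h1]
        calc Real.sqrt (φ τ ^ 2) ≤ Real.sqrt (τ * φ 1 ^ 2) := Real.sqrt_le_sqrt hφτ2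
          _ = Real.sqrt τ * φ 1 := by
              rw [Real.sqrt_mul hτ, Real.sqrt_sq (hφnonneg 1 (by norm_num))]
      set x := Real.sqrt τ with hxdef
      have hx2 : x ^ 2 = τ := Real.sq_sqrt hτ
      refine le_trans ?_ (le_max_right _ _)
      have hkey : -(1/α) * x^2 + x * φ 1 ≤ α * φ 1 ^ 2 / 4 := by
        rw [← mul_le_mul_iff_right₀ hα]
        have hexp : α * (-(1/α) * x^2 + x * φ 1) = -x^2 + α * (x * φ 1) := by
          field_simp
        rw [hexp]
        nlinarith [sq_nonneg (2*x - α * φ 1)]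
      calc -(1/α) * τ + φ τ ≤ -(1/α) * x^2 + x * φ 1 := by rw [hx2]; linarith
        _ ≤ α * φ 1 ^ 2 / 4 := hkey
  have hP0 : 0 ≤ negPhiStar φ (-(1/α)) := le_csSup hbdd hmem0
  -- R udag is finite
  have hRudag_ne_top : R udag ≠ ⊤ := by
    intro h
    obtain ⟨u, hu⟩ := hRtop
    apply hu
    have h2 := hsub u
    rw [h, EReal.top_add_coe] at h2
    exact top_le_iff.mp h2
  set r0 : ℝ := (R udag).toReal with hr0def
  have hr0 : R udag = ((r0 : ℝ) : EReal) := (EReal.coe_toReal hRudag_ne_top (hRbot udag)).symm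
  -- S (F udag) gobs is finite
  have hSud_ne : S (F udag) gobs ≠ ⊤ := by
    intro h
    have h1 := hA1 udag hudag
    rw [hT0, h] at h1
    simp only [EReal.coe_ennreal_zero, EReal.coe_ennreal_top] at h1
    rw [zero_sub] at h1
    rw [EReal.sub_top, le_bot_iff, ← EReal.coe_neg] at h1
    exact EReal.coe_ne_bot _ h1
  set s0 : ℝ := (S (F udag) gobs).toReal with hs0def
  have hs0 : ((S (F udag) gobs : ℝ≥0∞) : EReal) = ((s0 : ℝ) : EReal) := ereal_ennreal_eq hSud_ne
  have hm := hmin udag hudag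
  rw [hs0, hr0, ← EReal.coe_mul] at hm
  -- R uα is finite
  have hRuα_ne_top : R uα ≠ ⊤ := by
    intro h
    rw [h] at hm
    rw [EReal.mul_top_of_pos (by exact_mod_cast hα)] at hm
    rw [EReal.add_top_of_ne_bot (EReal.coe_ennreal_ne_bot _)] at hm
    rw [← EReal.coe_add, top_le_iff] at hm
    exact (EReal.coe_ne_top _) hm
  set r1 : ℝ := (R uα).toReal with hr1def
  have hr1 : R uα = ((r1 : ℝ) : EReal) := (EReal.coe_toReal hRuα_ne_top (hRbot uα)).symm
  -- S (F uα) gobs is finite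
  have hSuα_ne : S (F uα) gobs ≠ ⊤ := by
    intro h
    rw [h, hr1, ← EReal.coe_mul, EReal.coe_ennreal_top, EReal.top_add_coe,
      ← EReal.coe_add, top_le_iff] at hm
    exact (EReal.coe_ne_top _) hm
  set s1 : ℝ := (S (F uα) gobs).toReal with hs1def
  have hs1 : ((S (F uα) gobs : ℝ≥0∞) : EReal) = ((s1 : ℝ) : EReal) := ereal_ennreal_eq hSuα_ne
  rw [hs1, hr1, ← EReal.coe_mul, ← EReal.coe_add, ← EReal.coe_add] at hm
  have hm' : s1 + α * r1 ≤ s0 + α * r0 := by exact_mod_cast hm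
  -- T (F uα) (F udag) is finite
  have hAu := hA1 uα huα
  rw [hs1, hs0, ← EReal.coe_sub] at hAu
  have hT_ne : T (F uα) (F udag) ≠ ⊤ := by
    intro h
    rw [h, EReal.coe_ennreal_top, EReal.top_sub_coe, top_le_iff] at hAu
    exact (EReal.coe_ne_top _) hAu
  set t : ℝ := (T (F uα) (F udag)).toReal with htdef
  have ht0 : 0 ≤ t := ENNReal.toReal_nonneg
  rw [ereal_ennreal_eq hT_ne, ← EReal.coe_sub] at hAu
  have hA1' : t - err ≤ s1 - s0 := by exact_mod_cast hAu
  -- the Bregman distance is the real number d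
  set d : ℝ := r1 - r0 - ustar (uα - udag) with hddef
  have hbreg : bregman R ustar udag uα = ((d : ℝ) : EReal) := by
    rw [bregman, hr0, hr1, ← EReal.coe_sub, ← EReal.coe_sub]
  have hd0 : 0 ≤ d := by
    have h2 := hsub uα
    rw [hr0, hr1, ← EReal.coe_add] at h2
    have : r0 + ustar (uα - udag) ≤ r1 := by exact_mod_cast h2
    simp only [hddef]; linarith
  -- A2 in real form
  have hA2' : β * d ≤ r1 - r0 + φ t := by
    have h2 := hA2 uα huα
    rw [hbreg, hr0, hr1, ← EReal.coe_mul, ← EReal.coe_sub, phiE, if_neg hT_ne,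
      ← EReal.coe_add] at h2
    exact_mod_cast h2
  -- bound on the Bregman distance
  have hbd' : ‖uα - udag‖ ^ q ≤ Cbd * d := by
    have h2 := hbd uα huα
    rw [hbreg, ← EReal.coe_mul] at h2
    exact_mod_cast h2
  have hkey : -(1/α) * t + φ t ≤ negPhiStar φ (-(1/α)) :=
    le_csSup hbdd ⟨t, ht0, rfl⟩
  -- combine everything: d ≤ 2 err/α + 2 P
  have hrr : r1 - r0 ≤ (err - t) / α := by
    rw [le_div_iff₀ hα]
    nlinarith [hm', hA1']
  have hdle : d ≤ 2 * (err / α) + 2 * negPhiStar φ (-(1/α)) := by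
    have h3 : (1/2) * d ≤ β * d := mul_le_mul_of_nonneg_right hβ hd0
    have heq : (err - t) / α = err / α + (-(1/α) * t) := by ring
    have h4 : (1/2) * d ≤ err / α + negPhiStar φ (-(1/α)) := by
      calc (1/2) * d ≤ β * d := h3
        _ ≤ r1 - r0 + φ t := hA2'
        _ ≤ (err - t)/α + φ t := by linarith
        _ = err / α + (-(1/α) * t + φ t) := by rw [heq]; ring
        _ ≤ err / α + negPhiStar φ (-(1/α)) := by linarith
    linarith
  -- final computation with rpow
  set A : ℝ := 2 * Cbd * negPhiStar φ (-(1/α)) with hAdef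
  set Bv : ℝ := 2 * Cbd * err / α with hBdef
  have hA0 : 0 ≤ A := by positivity
  have hB0 : 0 ≤ Bv := by positivity
  have hq0 : 0 < q := lt_of_lt_of_le one_pos hq
  have hnorm : ‖uα - udag‖ ^ q ≤ A + Bv := by
    have h5 := mul_le_mul_of_nonneg_left hdle (le_of_lt hCbd)
    have heq : Cbd * (2 * (err / α) + 2 * negPhiStar φ (-(1/α))) = A + Bv := by
      simp only [hAdef, hBdef]; ring
    rw [heq] at h5
    linarith
  have hid : (‖uα - udag‖ ^ q) ^ (1/q) = ‖uα - udag‖ := by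
    rw [← Real.rpow_mul (norm_nonneg _), mul_one_div_cancel (ne_of_gt hq0), Real.rpow_one]
  have hstep1 : (‖uα - udag‖ ^ q) ^ (1/q) ≤ (A + Bv) ^ (1/q) :=
    Real.rpow_le_rpow (Real.rpow_nonneg (norm_nonneg _) q) hnorm (by positivity)
  have hstep2 : (A + Bv) ^ (1/q) ≤ A ^ (1/q) + Bv ^ (1/q) :=
    real_rpow_add_le hA0 hB0 (by positivity) (by
      rw [div_le_one hq0]; exact hq)
  calc ‖uα - udag‖ = (‖uα - udag‖ ^ q) ^ (1/q) := hid.symm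
    _ ≤ (A + Bv) ^ (1/q) := hstep1
    _ ≤ A ^ (1/q) + Bv ^ (1/q) := hstep2
    _ = (1/2) * (2 * A ^ (1/q) + 2 * Bv ^ (1/q)) := by ring
end
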